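/- For a differentiable function f : A → ℝ with A ⊆ ℝ open invex with respect to η, a, b ∈ A with a < a + η(b,a) and f′ integrable on [a, a+η(b,a)], we have ∫_0^1 t^α f′(a + t·η(b,a)) dt = f(a+η(b,a))/η(b,a) − (Γ(α+1)/η(b,a)^{α+1}) · J_{(a+η(b,a))−}^α f(a), for every α > 0. -/

import Mathlib

open MeasureTheory intervalIntegral

/-- Riemann-Liouville left fractional integral `J_{a+}^α f(x)`. -/
noncomputable def JL (α a x : ℝ) (f : ℝ → ℝ) : ℝ :=
  (1 / Real.Gamma α) * ∫ t in a..x, (x - t) ^ (α - 1) * f t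

/-- Riemann-Liouville right fractional integral `J_{b-}^α f(x)`. -/
noncomputable def JR (α x b : ℝ) (f : ℝ → ℝ) : ℝ :=
  (1 / Real.Gamma α) * ∫ t in x..b, (t - x) ^ (α - 1) * f t

/-- `A` is invex with respect to `η`. -/
def InvexSet (A : Set ℝ) (η : ℝ → ℝ → ℝ) : Prop :=
  ∀ x ∈ A, ∀ y ∈ A, ∀ t ∈ Set.Icc (0:ℝ) 1, x + t * η y x ∈ A

/-- `f` is preinvex with respect to `η` on `A`. -/
def PreinvexOn (A : Set ℝ) (η : ℝ → ℝ → ℝ) (f : ℝ → ℝ) : Prop :=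
  ∀ x ∈ A, ∀ y ∈ A, ∀ t ∈ Set.Icc (0:ℝ) 1,
    f (x + t * η y x) ≤ (1 - t) * f x + t * f y

/-- Condition C of Mohan and Neogy. -/
def CondC (A : Set ℝ) (η : ℝ → ℝ → ℝ) : Prop :=
  ∀ x ∈ A, ∀ y ∈ A, ∀ t ∈ Set.Icc (0:ℝ) 1,
    η y (y + t * η x y) = -t * η x y ∧ η x (y + t * η x y) = (1 - t) * η x y

theorem integral_tpow_deriv
    (A : Set ℝ) (η : ℝ → ℝ → ℝ) (a b : ℝ) (f : ℝ → ℝ) (α : ℝ)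
    (hA : IsOpen A) (hinv : InvexSet A η) (ha : a ∈ A) (hb : b ∈ A)
    (hab : a < a + η b a)
    (hdiff : ∀ x ∈ A, DifferentiableAt ℝ f x)
    (hint : IntervalIntegrable (deriv f) volume a (a + η b a))
    (hα : 0 < α) :
    ∫ t in (0:ℝ)..1, t ^ α * deriv f (a + t * η b a) =
      f (a + η b a) / η b a -
        Real.Gamma (α + 1) / (η b a) ^ (α + 1) * JR α a (a + η b a) f := by
  set c := η b a with hc
  have hη : 0 < c := by linarith
  set b' := a + c with hb'
  have hab' : a ≤ b' := hab.le
  have hsub : Set.Icc a b' ⊆ A := by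
    intro u hu
    have ht : (u - a) / c ∈ Set.Icc (0:ℝ) 1 := by
      constructor
      · exact div_nonneg (by linarith [hu.1]) hη.le
      · rw [div_le_one hη]; linarith [hu.2]
    have := hinv a ha b hb _ ht
    rwa [div_mul_cancel₀ _ hη.ne', add_sub_cancel] at this
  have hfc : ContinuousOn f (Set.Icc a b') := fun u hu =>
    (hdiff u (hsub hu)).continuousAt.continuousWithinAt
  have hpow_cont : ContinuousOn (fun u : ℝ => (u - a) ^ α) (Set.Icc a b') :=
    ((continuous_id.sub continuous_const).continuousOn).rpow_const fun x _ => Or.inr hα.le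
  -- integrability pieces
  have hI1 : IntervalIntegrable (fun u => α * (u - a) ^ (α - 1) * f u) volume a b' := by
    have h0 : IntervalIntegrable (fun x : ℝ => x ^ (α - 1)) volume 0 c :=
      intervalIntegral.intervalIntegrable_rpow' (by linarith)
    have h1 := (h0.comp_sub_right a).const_mul α
    simp only [zero_add] at h1
    rw [add_comm c a] at h1
    exact h1.mul_continuousOn (by rwa [Set.uIcc_of_le hab'])
  have hI2 : IntervalIntegrable (fun u => (u - a) ^ α * deriv f u) volume a b' :=
    hint.continuousOn_mul (by rwa [Set.uIcc_of_le hab'])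
  -- FTC for F u = (u-a)^α * f u
  have hftc : ∫ u in a..b',
      (α * (u - a) ^ (α - 1) * f u + (u - a) ^ α * deriv f u) = c ^ α * f b' := by
    have key := intervalIntegral.integral_eq_sub_of_hasDeriv_right_of_le hab'
      (f := fun u => (u - a) ^ α * f u)
      (f' := fun u => α * (u - a) ^ (α - 1) * f u + (u - a) ^ α * deriv f u)
      (hpow_cont.mul hfc)
      (by
        intro u hu
        have hu0 : u - a ≠ 0 := by have := hu.1; intro h; nlinarith [hu.1]
        have h1 : HasDerivAt (fun u : ℝ => (u - a) ^ α) (α * (u - a) ^ (α - 1)) u := by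
          have hr := Real.hasDerivAt_rpow_const (x := u - a) (p := α) (Or.inl hu0)
          have := hr.comp u ((hasDerivAt_id u).sub_const a)
          simpa [Function.comp_def] using this
        have h2 : HasDerivAt f (deriv f u) u :=
          (hdiff u (hsub ⟨hu.1.le, hu.2.le⟩)).hasDerivAt
        exact (h1.mul h2).hasDerivWithinAt)
      (hI1.add hI2)
    rw [key]
    show (b' - a) ^ α * f b' - (a - a) ^ α * f a = c ^ α * f b'
    rw [show b' - a = c from by ring, sub_self, Real.zero_rpow hα.ne', zero_mul, sub_zero]
  rw [intervalIntegral.integral_add hI1 hI2] at hftc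
  -- substitution step
  have hsubst : (∫ t in (0:ℝ)..1, t ^ α * deriv f (a + t * c)) =
      c⁻¹ * ∫ u in a..b', ((u - a) / c) ^ α * deriv f u := by
    have h := intervalIntegral.integral_comp_mul_add
      (f := fun u => ((u - a) / c) ^ α * deriv f u) (a := 0) (b := 1) hη.ne' a
    have h1 : ∀ t : ℝ, ((c * t + a - a) / c) ^ α * deriv f (c * t + a) =
        t ^ α * deriv f (a + t * c) := by
      intro t
      rw [add_sub_cancel_right, mul_div_cancel_left₀ _ hη.ne', mul_comm c t, add_comm]
    simp only [h1] at h
    rw [h]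
    norm_num [hb', add_comm, smul_eq_mul]
  have hcongr : (∫ u in a..b', ((u - a) / c) ^ α * deriv f u) =
      (c ^ α)⁻¹ * ∫ u in a..b', (u - a) ^ α * deriv f u := by
    rw [← intervalIntegral.integral_const_mul]
    apply intervalIntegral.integral_congr
    intro u hu
    rw [Set.uIcc_of_le hab'] at hu
    show ((u - a) / c) ^ α * deriv f u = (c ^ α)⁻¹ * ((u - a) ^ α * deriv f u)
    rw [Real.div_rpow (by linarith [hu.1]) hη.le]
    ring
  -- final arithmetic
  have hS : (∫ u in a..b', (u - a) ^ α * deriv f u) =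
      c ^ α * f b' - α * ∫ u in a..b', (u - a) ^ (α - 1) * f u := by
    have := hftc
    rw [show (fun u => α * (u - a) ^ (α - 1) * f u) =
      (fun u => α * ((u - a) ^ (α - 1) * f u)) by funext u; ring,
      intervalIntegral.integral_const_mul] at this
    linarith
  rw [hsubst, hcongr, hS, JR]
  have hΓ : Real.Gamma (α + 1) = α * Real.Gamma α := Real.Gamma_add_one hα.ne'
  have hΓpos : 0 < Real.Gamma α := Real.Gamma_pos_of_pos hα
  have hcα : (0:ℝ) < c ^ α := Real.rpow_pos_of_pos hη α
  have hc1 : c ^ (α + 1) = c ^ α * c := by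
    rw [Real.rpow_add hη, Real.rpow_one]
  rw [hΓ, hc1]
  field_simp
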